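/- In one dimension, the pre-wavelets of level t span the L²-orthogonal complement of V_{t−1} within V_t: V_t = V_{t−1} ⊕ W_t where W_t = span{φ_{t,i} : i ∈ Ξ_t}, the sum being L²-orthogonal, and dim W_t = 2^t. -/

import Mathlib

open MeasureTheory intervalIntegral

/-- Hat function of level `t` at node `2^{-(t+1)} i`. -/
noncomputable def hat (t i : ℕ) (x : ℝ) : ℝ :=
  max 0 (1 - |x * 2 ^ (t + 1) - (i : ℝ)|)

/-- Index set `I_t = {1,…,2^{t+1}-1}`. -/
def Idx (t : ℕ) : Finset ℕ := Finset.Icc 1 (2 ^ (t + 1) - 1)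

/-- Hierarchical complement index set `Ξ_t` (odd indices for `t ≥ 1`, `{1}` for `t = 0`). -/
def Xi (t : ℕ) : Finset ℕ := if t = 0 then {1} else (Idx t).filter (fun i => Odd i)

/-- One-dimensional pre-wavelet `φ_{t,i}` with boundary modification. -/
noncomputable def prew (t i : ℕ) (x : ℝ) : ℝ :=
  if t = 0 then hat 0 1 x
  else if i = 1 then 9/10 * hat t 1 x - 3/5 * hat t 2 x + 1/10 * hat t 3 x
  else if i = 2 ^ (t + 1) - 1 then
    9/10 * hat t i x - 3/5 * hat t (i-1) x + 1/10 * hat t (i-2) x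
  else hat t i x - 3/5 * (hat t (i+1) x + hat t (i-1) x)
    + 1/10 * (hat t (i+2) x + hat t (i-2) x)


/-- `V_t`: span of the hat functions of level `t`. -/
noncomputable def Vsp (t : ℕ) : Submodule ℝ (ℝ → ℝ) :=
  Submodule.span ℝ {f | ∃ i ∈ Idx t, f = hat t i}

/-- `W_t`: span of the pre-wavelets of level `t`. -/
noncomputable def Wsp (t : ℕ) : Submodule ℝ (ℝ → ℝ) :=
  Submodule.span ℝ {f | ∃ i ∈ Xi t, f = prew t i}

section aux
open Set
noncomputable def g (z : ℝ) : ℝ := max 0 (1 - |z|)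
lemma g_cont : Continuous g := continuous_const.max (continuous_const.sub continuous_abs)
lemma g_zero {z : ℝ} (h : 1 ≤ |z|) : g z = 0 := max_eq_left (by linarith)
lemma g_zero' {z : ℝ} (h : 1 ≤ z) : g z = 0 := g_zero (by rw [abs_of_nonneg (by linarith)]; exact h)
lemma g_zero'' {z : ℝ} (h : z ≤ -1) : g z = 0 := g_zero (by rw [abs_of_nonpos (by linarith)]; linarith)
lemma g_nonneg (z : ℝ) : 0 ≤ g z := le_max_left _ _
lemma g_eq_neg {z : ℝ} (h1 : -1 ≤ z) (h2 : z ≤ 0) : g z = 1 + z := by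
  unfold g; rw [abs_of_nonpos h2, max_eq_right (by linarith)]; ring
lemma g_eq_pos {z : ℝ} (h1 : 0 ≤ z) (h2 : z ≤ 1) : g z = 1 - z := by
  unfold g; rw [abs_of_nonneg h1, max_eq_right (by linarith)]

lemma g_half (z : ℝ) : g (z / 2) = 1/2 * g (z + 1) + g z + 1/2 * g (z - 1) := by
  rcases le_total z (-1) with h | h
  · rcases le_total z (-2) with h2 | h2
    · rw [g_zero'' (by linarith), g_zero'' (by linarith), g_zero'' (by linarith),
        g_zero'' (by linarith)]
      ring
    · rw [g_eq_neg (by linarith) (by linarith), g_eq_neg (by linarith) (by linarith),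
        g_zero'' (by linarith), g_zero'' (by linarith)]
      ring
  · rcases le_total z 0 with h2 | h2
    · rw [g_eq_neg (by linarith) (by linarith), g_eq_pos (by linarith) (by linarith),
        g_eq_neg (by linarith) (by linarith), g_zero'' (by linarith)]
      ring
    · rcases le_total z 1 with h3 | h3
      · rw [g_eq_pos (by linarith) (by linarith), g_zero' (by linarith),
          g_eq_pos (by linarith) (by linarith), g_eq_neg (by linarith) (by linarith)]
        ring
      · rcases le_total z 2 with h4 | h4
        · rw [g_eq_pos (by linarith) (by linarith), g_zero' (by linarith),
            g_zero' (by linarith), g_eq_pos (by linarith) (by linarith)]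
          ring
        · rw [g_zero' (by linarith), g_zero' (by linarith), g_zero' (by linarith),
            g_zero' (by linarith)]
          ring

lemma gg_cont (a b : ℝ) : Continuous (fun y => g (y - a) * g (y - b)) :=
  ((g_cont.comp (continuous_id.sub continuous_const)).mul
    (g_cont.comp (continuous_id.sub continuous_const)))

lemma gg_ii (a b c d : ℝ) : IntervalIntegrable (fun y => g (y - a) * g (y - b)) volume c d :=
  (gg_cont a b).intervalIntegrable _ _

lemma I_diag (a N : ℝ) (ha1 : 1 ≤ a) (haN : a + 1 ≤ N) :
    ∫ y in (0:ℝ)..N, g (y - a) * g (y - a) = 2/3 := by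
  have h1 : ∫ y in (0:ℝ)..(a-1), g (y - a) * g (y - a) = 0 := by
    rw [integral_congr (g := fun _ => (0:ℝ)), intervalIntegral.integral_zero]
    intro y hy
    rw [uIcc_of_le (by linarith)] at hy
    show g (y - a) * g (y - a) = 0
    rw [g_zero'' (by linarith [hy.2]), zero_mul]
  have h3 : ∫ y in (a+1:ℝ)..N, g (y - a) * g (y - a) = 0 := by
    rw [integral_congr (g := fun _ => (0:ℝ)), intervalIntegral.integral_zero]
    intro y hy
    rw [uIcc_of_le (by linarith)] at hy
    show g (y - a) * g (y - a) = 0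
    rw [g_zero' (by linarith [hy.1]), zero_mul]
  have h2 : ∫ y in (a-1:ℝ)..(a+1), g (y - a) * g (y - a) = 2/3 := by
    rw [integral_comp_sub_right (fun y => g y * g y) a]
    have e1 : a - 1 - a = (-1 : ℝ) := by ring
    have e2 : a + 1 - a = (1 : ℝ) := by ring
    rw [e1, e2]
    rw [← integral_add_adjacent_intervals (f := fun x => g x * g x) (b := (0:ℝ))
      ((g_cont.mul g_cont).intervalIntegrable _ _) ((g_cont.mul g_cont).intervalIntegrable _ _)]
    have p1 : ∫ y in (-1:ℝ)..0, g y * g y = ∫ y in (-1:ℝ)..0, (y+1)^2 := by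
      apply integral_congr
      intro y hy
      rw [uIcc_of_le (by norm_num)] at hy
      show g y * g y = _
      rw [g_eq_neg hy.1 hy.2]; ring
    have p2 : ∫ y in (0:ℝ)..1, g y * g y = ∫ y in (0:ℝ)..1, (y-1)^2 := by
      apply integral_congr
      intro y hy
      rw [uIcc_of_le (by norm_num)] at hy
      show g y * g y = _
      rw [g_eq_pos hy.1 hy.2]; ring
    rw [p1, p2, integral_comp_add_right (fun y => y^2) 1, integral_comp_sub_right (fun y => y^2) 1]
    norm_num [integral_pow]
  rw [← integral_add_adjacent_intervals (b := (a-1:ℝ)) (gg_ii a a _ _) (gg_ii a a _ _),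
    ← integral_add_adjacent_intervals (a := (a-1:ℝ)) (b := (a+1:ℝ)) (gg_ii a a _ _) (gg_ii a a _ _),
    h1, h2, h3]
  ring

lemma I_adj (a N : ℝ) (ha1 : 1 ≤ a) (haN : a + 2 ≤ N) :
    ∫ y in (0:ℝ)..N, g (y - a) * g (y - (a+1)) = 1/6 := by
  have h1 : ∫ y in (0:ℝ)..a, g (y - a) * g (y - (a+1)) = 0 := by
    rw [integral_congr (g := fun _ => (0:ℝ)), intervalIntegral.integral_zero]
    intro y hy
    rw [uIcc_of_le (by linarith)] at hy
    show g (y - a) * g (y - (a+1)) = 0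
    rw [g_zero'' (z := y - (a+1)) (by linarith [hy.2]), mul_zero]
  have h3 : ∫ y in (a+1:ℝ)..N, g (y - a) * g (y - (a+1)) = 0 := by
    rw [integral_congr (g := fun _ => (0:ℝ)), intervalIntegral.integral_zero]
    intro y hy
    rw [uIcc_of_le (by linarith)] at hy
    show g (y - a) * g (y - (a+1)) = 0
    rw [g_zero' (by linarith [hy.1]), zero_mul]
  have h2 : ∫ y in (a:ℝ)..(a+1), g (y - a) * g (y - (a+1)) = 1/6 := by
    have : ∀ y, g (y - a) * g (y - (a+1)) = (fun u => g u * g (u - 1)) (y - a) := by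
      intro y; simp only []; ring_nf
    rw [integral_congr (g := fun y => (fun u => g u * g (u-1)) (y - a)) (fun y _ => this y),
      integral_comp_sub_right (fun u => g u * g (u-1)) a]
    have e1 : a - a = (0:ℝ) := by ring
    have e2 : a + 1 - a = (1:ℝ) := by ring
    rw [e1, e2]
    have p : ∫ u in (0:ℝ)..1, g u * g (u-1) = ∫ u in (0:ℝ)..1, (u - u^2) := by
      apply integral_congr
      intro u hu
      rw [uIcc_of_le (by norm_num)] at hu
      show g u * g (u-1) = _
      rw [g_eq_pos hu.1 hu.2, g_eq_neg (by linarith [hu.1]) (by linarith [hu.2])]; ring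
    rw [p, integral_sub (intervalIntegrable_id) (intervalIntegrable_pow 2), integral_id]
    norm_num [integral_pow]
  rw [← integral_add_adjacent_intervals (b := (a:ℝ)) (gg_ii _ _ _ _) (gg_ii _ _ _ _),
    ← integral_add_adjacent_intervals (a := (a:ℝ)) (b := (a+1:ℝ)) (gg_ii _ _ _ _) (gg_ii _ _ _ _),
    h1, h2, h3]
  ring

lemma I_far (a b N : ℝ) (h : 2 ≤ |a - b|) :
    ∫ y in (0:ℝ)..N, g (y - a) * g (y - b) = 0 := by
  have : ∀ y : ℝ, g (y - a) * g (y - b) = 0 := by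
    intro y
    rcases le_or_gt 1 |y - a| with hy | hy
    · rw [g_zero hy, zero_mul]
    · have : |a - b| ≤ |y - a| + |y - b| := by
        calc |a - b| = |(y - b) - (y - a)| := by ring_nf
        _ ≤ |y - b| + |y - a| := abs_sub _ _
        _ = |y - a| + |y - b| := by ring
      rw [g_zero (z := y - b) (by linarith), mul_zero]
  simp only [this, intervalIntegral.integral_zero]

lemma hat_eq_g (t i : ℕ) (x : ℝ) : hat t i x = g (x * 2 ^ (t+1) - i) := rfl

lemma hat_cont (t i : ℕ) : Continuous (hat t i) := by
  have : hat t i = fun x => g (x * 2 ^ (t+1) - i) := rfl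
  rw [this]
  exact g_cont.comp ((continuous_id.mul continuous_const).sub continuous_const)

lemma hh_ii (t a b : ℕ) (c d : ℝ) :
    IntervalIntegrable (fun x => hat t a x * hat t b x) volume c d :=
  (((hat_cont t a).mul (hat_cont t b))).intervalIntegrable _ _

lemma gram (t a b : ℕ) (ha : a ∈ Idx t) (hb : b ∈ Idx t) :
    ∫ x in (0:ℝ)..1, hat t a x * hat t b x
      = (if a = b then 2/3 else if a + 1 = b ∨ b + 1 = a then 1/6 else 0) / 2 ^ (t+1) := by
  rw [Idx, Finset.mem_Icc] at ha hb
  have hpow : (1:ℕ) ≤ 2 ^ (t+1) := Nat.one_le_two_pow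
  have hN : ((2:ℝ) ^ (t+1)) ≠ 0 := by positivity
  have key := integral_comp_mul_right (a := (0:ℝ)) (b := 1)
    (fun y => g (y - (a:ℝ)) * g (y - (b:ℝ))) hN
  simp only [zero_mul, one_mul] at key
  have e : ∀ x : ℝ, hat t a x * hat t b x
      = (fun y => g (y - (a:ℝ)) * g (y - (b:ℝ))) (x * 2 ^ (t+1)) := by
    intro x; rw [hat_eq_g, hat_eq_g]
  rw [integral_congr (g := fun x => (fun y => g (y - (a:ℝ)) * g (y - (b:ℝ))) (x * 2 ^ (t+1)))
    (fun x _ => e x), key, smul_eq_mul]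
  have ha1 : (1:ℝ) ≤ (a:ℝ) := by exact_mod_cast ha.1
  have hb1 : (1:ℝ) ≤ (b:ℝ) := by exact_mod_cast hb.1
  have haN : (a:ℝ) + 1 ≤ 2 ^ (t+1) := by
    have : a + 1 ≤ 2 ^ (t+1) := by omega
    exact_mod_cast this
  have hbN : (b:ℝ) + 1 ≤ 2 ^ (t+1) := by
    have : b + 1 ≤ 2 ^ (t+1) := by omega
    exact_mod_cast this
  rcases eq_or_ne a b with rfl | hab
  · rw [I_diag _ _ ha1 haN, if_pos rfl]; ring
  · rcases eq_or_ne (a+1) b with hb' | hb''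
    · have : (b:ℝ) = (a:ℝ) + 1 := by exact_mod_cast hb'.symm
      rw [this, I_adj _ _ ha1 (by linarith), if_neg hab, if_pos (Or.inl hb')]; ring
    · rcases eq_or_ne (b+1) a with ha' | ha''
      · have e2 : ∀ x : ℝ, g (x - (a:ℝ)) * g (x - (b:ℝ)) = g (x - (b:ℝ)) * g (x - ((b:ℝ)+1)) := by
          intro x
          have : (a:ℝ) = (b:ℝ) + 1 := by exact_mod_cast ha'.symm
          rw [this]; ring
        have hb2 : (b:ℝ) + 2 ≤ 2 ^ (t+1) := by
          have : b + 2 ≤ 2 ^ (t+1) := by omega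
          exact_mod_cast this
        rw [integral_congr (fun x _ => e2 x), I_adj _ _ hb1 hb2, if_neg hab,
          if_pos (Or.inr ha')]
        ring
      · have hfar : 2 ≤ |(a:ℝ) - (b:ℝ)| := by
          have : a + 2 ≤ b ∨ b + 2 ≤ a := by omega
          rcases this with h | h
          · have h' : (a:ℝ) + 2 ≤ (b:ℝ) := by exact_mod_cast h
            rw [abs_of_nonpos (by linarith)]; linarith
          · have h' : (b:ℝ) + 2 ≤ (a:ℝ) := by exact_mod_cast h
            rw [abs_of_nonneg (by linarith)]; linarith
        rw [I_far _ _ _ hfar, if_neg hab, if_neg (by push_neg; omega)]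
        ring

lemma hat_refine (t j : ℕ) (hj : 1 ≤ j) (x : ℝ) :
    hat t j x = 1/2 * hat (t+1) (2*j-1) x + hat (t+1) (2*j) x + 1/2 * hat (t+1) (2*j+1) x := by
  obtain ⟨m, rfl⟩ : ∃ m, j = m + 1 := ⟨j - 1, by omega⟩
  rw [hat_eq_g, hat_eq_g, hat_eq_g, hat_eq_g]
  have e0 : x * 2 ^ (t+1) - ((m+1:ℕ):ℝ) = (x * 2 ^ (t+1+1) - ((2*(m+1):ℕ):ℝ)) / 2 := by
    push_cast; ring
  have e1 : x * 2 ^ (t+1+1) - ((2*(m+1)-1:ℕ):ℝ) = (x * 2 ^ (t+1+1) - ((2*(m+1):ℕ):ℝ)) + 1 := by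
    have : 2*(m+1)-1 = 2*m+1 := by omega
    rw [this]; push_cast; ring
  have e2 : x * 2 ^ (t+1+1) - ((2*(m+1)+1:ℕ):ℝ) = (x * 2 ^ (t+1+1) - ((2*(m+1):ℕ):ℝ)) - 1 := by
    push_cast; ring
  rw [e0, e1, e2, g_half]

noncomputable def mv (d : ℤ) : ℝ :=
  if d.natAbs = 0 then 5/6 else if d.natAbs = 1 then 1/2 else if d.natAbs = 2 then 1/12 else 0

set_option maxHeartbeats 1000000 in
lemma mixed (t a j : ℕ) (ha : a ∈ Idx (t+1)) (hj : j ∈ Idx t) :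
    ∫ x in (0:ℝ)..1, hat (t+1) a x * hat t j x = mv ((a:ℤ) - 2*j) / 2 ^ (t+2) := by
  have hj' := hj
  rw [Idx, Finset.mem_Icc] at hj'
  have hpow : (1:ℕ) ≤ 2 ^ (t+1) := Nat.one_le_two_pow
  have hp2 : (2:ℕ)^(t+1+1) = 2 * 2^(t+1) := by ring
  have hm1 : 2*j-1 ∈ Idx (t+1) := by rw [Idx, Finset.mem_Icc] at *; omega
  have hm2 : 2*j ∈ Idx (t+1) := by rw [Idx, Finset.mem_Icc] at *; omega
  have hm3 : 2*j+1 ∈ Idx (t+1) := by rw [Idx, Finset.mem_Icc] at *; omega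
  have e : ∀ x : ℝ, hat (t+1) a x * hat t j x
      = 1/2 * (hat (t+1) a x * hat (t+1) (2*j-1) x) + (hat (t+1) a x * hat (t+1) (2*j) x
        + 1/2 * (hat (t+1) a x * hat (t+1) (2*j+1) x)) := by
    intro x; rw [hat_refine t j hj'.1 x]; ring
  have ii1 : IntervalIntegrable (fun x => 1/2 * (hat (t+1) a x * hat (t+1) (2*j-1) x)) volume 0 1 :=
    (hh_ii (t+1) a (2*j-1) 0 1).const_mul _
  have ii2 : IntervalIntegrable (fun x => hat (t+1) a x * hat (t+1) (2*j) x) volume 0 1 :=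
    hh_ii (t+1) a (2*j) 0 1
  have ii3 : IntervalIntegrable (fun x => 1/2 * (hat (t+1) a x * hat (t+1) (2*j+1) x)) volume 0 1 :=
    (hh_ii (t+1) a (2*j+1) 0 1).const_mul _
  rw [integral_congr (g := fun x => 1/2 * (hat (t+1) a x * hat (t+1) (2*j-1) x) + (hat (t+1) a x * hat (t+1) (2*j) x
        + 1/2 * (hat (t+1) a x * hat (t+1) (2*j+1) x))) (fun x _ => e x),
    intervalIntegral.integral_add ii1 (ii2.add ii3), intervalIntegral.integral_add ii2 ii3,
    intervalIntegral.integral_const_mul, intervalIntegral.integral_const_mul,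
    gram _ _ _ ha hm1, gram _ _ _ ha hm2, gram _ _ _ ha hm3]
  have hcase : a = 2*j ∨ a = 2*j+1 ∨ a+1 = 2*j ∨ a = 2*j+2 ∨ a+2 = 2*j
      ∨ (2*j+3 ≤ a ∨ a+3 ≤ 2*j) := by omega
  have hj1 : 1 ≤ j := hj'.1
  rcases hcase with h | h | h | h | h | h | h
  · rw [if_neg (by omega), if_pos (by omega), if_pos (by omega), if_neg (by omega),
      if_pos (by omega), show (a:ℤ) - 2*j = 0 by omega]
    norm_num [mv]; ring_nf
  · rw [if_neg (by omega), if_neg (by omega), if_neg (by omega), if_pos (by omega),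
      if_pos (by omega), show (a:ℤ) - 2*j = 1 by omega]
    norm_num [mv]; ring_nf
  · rw [if_pos (by omega), if_neg (by omega), if_pos (by omega), if_neg (by omega),
      if_neg (by omega), show (a:ℤ) - 2*j = -1 by omega]
    norm_num [mv]; ring_nf
  · rw [if_neg (by omega), if_neg (by omega), if_neg (by omega), if_neg (by omega),
      if_neg (by omega), if_pos (by omega), show (a:ℤ) - 2*j = 2 by omega]
    norm_num [mv]; ring_nf
  · rw [if_neg (by omega), if_pos (by omega), if_neg (by omega), if_neg (by omega),
      if_neg (by omega), if_neg (by omega), show (a:ℤ) - 2*j = -2 by omega]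
    norm_num [mv]; ring_nf
  · rw [if_neg (by omega), if_neg (by omega), if_neg (by omega), if_neg (by omega),
      if_neg (by omega), if_neg (by omega)]
    have hz : mv ((a:ℤ) - 2*j) = 0 := by
      unfold mv; rw [if_neg (by omega), if_neg (by omega), if_neg (by omega)]
    rw [hz]; ring
  · rw [if_neg (by omega), if_neg (by omega), if_neg (by omega), if_neg (by omega),
      if_neg (by omega), if_neg (by omega)]
    have hz : mv ((a:ℤ) - 2*j) = 0 := by
      unfold mv; rw [if_neg (by omega), if_neg (by omega), if_neg (by omega)]
    rw [hz]; ring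

lemma mh_ii (t a j : ℕ) (c d : ℝ) :
    IntervalIntegrable (fun x => hat (t+1) a x * hat t j x) volume c d :=
  ((hat_cont (t+1) a).mul (hat_cont t j)).intervalIntegrable _ _

lemma mv_zero (e : ℤ) (h : 3 ≤ e ∨ e ≤ -3) : mv e = 0 := by
  unfold mv; rw [if_neg (by omega), if_neg (by omega), if_neg (by omega)]

lemma mv_bnd (e : ℤ) (he : e % 2 = 1) (hneg : e ≤ -1) :
    9/10 * mv e - 3/5 * mv (e+1) + 1/10 * mv (e+2) = 0 := by
  have hc : e = -1 ∨ e = -3 ∨ e ≤ -5 := by omega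
  rcases hc with rfl | rfl | h
  · norm_num [mv]
  · norm_num [mv]
  · rw [mv_zero e (by omega), mv_zero (e+1) (by omega), mv_zero (e+2) (by omega)]; ring

lemma mv_bnd' (e : ℤ) (he : e % 2 = 1) (hpos : 1 ≤ e) :
    9/10 * mv e - 3/5 * mv (e-1) + 1/10 * mv (e-2) = 0 := by
  have hc : e = 1 ∨ e = 3 ∨ 5 ≤ e := by omega
  rcases hc with rfl | rfl | h
  · norm_num [mv]
  · norm_num [mv]
  · rw [mv_zero e (by omega), mv_zero (e-1) (by omega), mv_zero (e-2) (by omega)]; ring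

lemma mv_int (e : ℤ) (he : e % 2 = 1) :
    mv e - 3/5 * mv (e+1) - 3/5 * mv (e-1) + 1/10 * mv (e+2) + 1/10 * mv (e-2) = 0 := by
  have hc : e = 1 ∨ e = 3 ∨ e = -1 ∨ e = -3 ∨ 5 ≤ e ∨ e ≤ -5 := by omega
  rcases hc with rfl | rfl | rfl | rfl | h | h
  · norm_num [mv]
  · norm_num [mv]
  · norm_num [mv]
  · norm_num [mv]
  · rw [mv_zero e (by omega), mv_zero (e+1) (by omega), mv_zero (e-1) (by omega),
      mv_zero (e+2) (by omega), mv_zero (e-2) (by omega)]; ring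
  · rw [mv_zero e (by omega), mv_zero (e+1) (by omega), mv_zero (e-1) (by omega),
      mv_zero (e+2) (by omega), mv_zero (e-2) (by omega)]; ring

set_option maxHeartbeats 1000000 in
lemma orth_core (t i j : ℕ) (hi : i ∈ Xi (t+1)) (hj : j ∈ Idx t) :
    ∫ x in (0:ℝ)..1, prew (t+1) i x * hat t j x = 0 := by
  rw [Xi, if_neg (Nat.succ_ne_zero t), Finset.mem_filter, Idx, Finset.mem_Icc,
    Nat.odd_iff] at hi
  have hj' := hj
  rw [Idx, Finset.mem_Icc] at hj'
  have hp2 : (2:ℕ)^(t+1+1) = 2 * 2^(t+1) := by ring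
  have hpow : (1:ℕ) ≤ 2 ^ (t+1) := Nat.one_le_two_pow
  have hPne : ((2:ℝ)^(t+2)) ≠ 0 := by positivity
  rcases eq_or_ne i 1 with rfl | hi1
  · have ep : ∀ x : ℝ, prew (t+1) 1 x * hat t j x
        = (9/10) * (hat (t+1) 1 x * hat t j x) + ((-(3/5)) * (hat (t+1) 2 x * hat t j x)
          + (1/10) * (hat (t+1) 3 x * hat t j x)) := by
      intro x; rw [prew, if_neg (Nat.succ_ne_zero t), if_pos rfl]; ring
    rw [integral_congr (g := fun x => (9/10) * (hat (t+1) 1 x * hat t j x)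
        + ((-(3/5)) * (hat (t+1) 2 x * hat t j x) + (1/10) * (hat (t+1) 3 x * hat t j x)))
        (fun x _ => ep x),
      intervalIntegral.integral_add ((mh_ii t 1 j 0 1).const_mul _)
        (((mh_ii t 2 j 0 1).const_mul _).add ((mh_ii t 3 j 0 1).const_mul _)),
      intervalIntegral.integral_add ((mh_ii t 2 j 0 1).const_mul _)
        ((mh_ii t 3 j 0 1).const_mul _),
      intervalIntegral.integral_const_mul, intervalIntegral.integral_const_mul,
      intervalIntegral.integral_const_mul,
      mixed t 1 j (by rw [Idx, Finset.mem_Icc]; omega) hj,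
      mixed t 2 j (by rw [Idx, Finset.mem_Icc]; omega) hj,
      mixed t 3 j (by rw [Idx, Finset.mem_Icc]; omega) hj,
      show ((1:ℕ):ℤ) - 2*(j:ℤ) = 1-2*(j:ℤ) by push_cast; ring,
      show ((2:ℕ):ℤ) - 2*(j:ℤ) = (1-2*(j:ℤ))+1 by push_cast; ring,
      show ((3:ℕ):ℤ) - 2*(j:ℤ) = (1-2*(j:ℤ))+2 by push_cast; ring]
    have key := mv_bnd (1-2*(j:ℤ)) (by omega) (by omega)
    linear_combination key * ((2:ℝ)^(t+2))⁻¹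
  · obtain ⟨n, rfl⟩ : ∃ n, i = n + 3 := ⟨i - 3, by omega⟩
    rcases eq_or_ne (n+3) (2^(t+1+1)-1) with hR | hR
    · have ep : ∀ x : ℝ, prew (t+1) (n+3) x * hat t j x
          = (9/10) * (hat (t+1) (n+3) x * hat t j x) + ((-(3/5)) * (hat (t+1) (n+2) x * hat t j x)
            + (1/10) * (hat (t+1) (n+1) x * hat t j x)) := by
        intro x
        rw [prew, if_neg (Nat.succ_ne_zero t), if_neg hi1, if_pos hR,
          show n+3-1 = n+2 by omega, show n+3-2 = n+1 by omega]
        ring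
      rw [integral_congr (g := fun x => (9/10) * (hat (t+1) (n+3) x * hat t j x)
          + ((-(3/5)) * (hat (t+1) (n+2) x * hat t j x) + (1/10) * (hat (t+1) (n+1) x * hat t j x)))
          (fun x _ => ep x),
        intervalIntegral.integral_add ((mh_ii t (n+3) j 0 1).const_mul _)
          (((mh_ii t (n+2) j 0 1).const_mul _).add ((mh_ii t (n+1) j 0 1).const_mul _)),
        intervalIntegral.integral_add ((mh_ii t (n+2) j 0 1).const_mul _)
          ((mh_ii t (n+1) j 0 1).const_mul _),
        intervalIntegral.integral_const_mul, intervalIntegral.integral_const_mul,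
        intervalIntegral.integral_const_mul,
        mixed t (n+3) j (by rw [Idx, Finset.mem_Icc]; omega) hj,
        mixed t (n+2) j (by rw [Idx, Finset.mem_Icc]; omega) hj,
        mixed t (n+1) j (by rw [Idx, Finset.mem_Icc]; omega) hj,
        show ((n+3:ℕ):ℤ) - 2*(j:ℤ) = (n:ℤ)+3-2*(j:ℤ) by push_cast; ring,
        show ((n+2:ℕ):ℤ) - 2*(j:ℤ) = ((n:ℤ)+3-2*(j:ℤ))-1 by push_cast; ring,
        show ((n+1:ℕ):ℤ) - 2*(j:ℤ) = ((n:ℤ)+3-2*(j:ℤ))-2 by push_cast; ring]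
      have key := mv_bnd' ((n:ℤ)+3-2*(j:ℤ)) (by omega) (by omega)
      linear_combination key * ((2:ℝ)^(t+2))⁻¹
    · have ep : ∀ x : ℝ, prew (t+1) (n+3) x * hat t j x
          = (1:ℝ) * (hat (t+1) (n+3) x * hat t j x) + ((-(3/5)) * (hat (t+1) (n+4) x * hat t j x)
            + ((-(3/5)) * (hat (t+1) (n+2) x * hat t j x)
            + ((1/10) * (hat (t+1) (n+5) x * hat t j x)
            + (1/10) * (hat (t+1) (n+1) x * hat t j x)))) := by
        intro x
        rw [prew, if_neg (Nat.succ_ne_zero t), if_neg hi1, if_neg hR,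
          show n+3+1 = n+4 by omega, show n+3-1 = n+2 by omega,
          show n+3+2 = n+5 by omega, show n+3-2 = n+1 by omega]
        ring
      rw [integral_congr (g := fun x => (1:ℝ) * (hat (t+1) (n+3) x * hat t j x)
          + ((-(3/5)) * (hat (t+1) (n+4) x * hat t j x)
          + ((-(3/5)) * (hat (t+1) (n+2) x * hat t j x)
          + ((1/10) * (hat (t+1) (n+5) x * hat t j x)
          + (1/10) * (hat (t+1) (n+1) x * hat t j x)))))
          (fun x _ => ep x),
        intervalIntegral.integral_add ((mh_ii t (n+3) j 0 1).const_mul _)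
          (((mh_ii t (n+4) j 0 1).const_mul _).add (((mh_ii t (n+2) j 0 1).const_mul _).add
            (((mh_ii t (n+5) j 0 1).const_mul _).add ((mh_ii t (n+1) j 0 1).const_mul _)))),
        intervalIntegral.integral_add ((mh_ii t (n+4) j 0 1).const_mul _)
          (((mh_ii t (n+2) j 0 1).const_mul _).add
            (((mh_ii t (n+5) j 0 1).const_mul _).add ((mh_ii t (n+1) j 0 1).const_mul _))),
        intervalIntegral.integral_add ((mh_ii t (n+2) j 0 1).const_mul _)
          (((mh_ii t (n+5) j 0 1).const_mul _).add ((mh_ii t (n+1) j 0 1).const_mul _)),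
        intervalIntegral.integral_add ((mh_ii t (n+5) j 0 1).const_mul _)
          ((mh_ii t (n+1) j 0 1).const_mul _),
        intervalIntegral.integral_const_mul, intervalIntegral.integral_const_mul,
        intervalIntegral.integral_const_mul, intervalIntegral.integral_const_mul,
        intervalIntegral.integral_const_mul,
        mixed t (n+3) j (by rw [Idx, Finset.mem_Icc]; omega) hj,
        mixed t (n+4) j (by rw [Idx, Finset.mem_Icc]; omega) hj,
        mixed t (n+2) j (by rw [Idx, Finset.mem_Icc]; omega) hj,
        mixed t (n+5) j (by rw [Idx, Finset.mem_Icc]; omega) hj,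
        mixed t (n+1) j (by rw [Idx, Finset.mem_Icc]; omega) hj,
        show ((n+3:ℕ):ℤ) - 2*(j:ℤ) = (n:ℤ)+3-2*(j:ℤ) by push_cast; ring,
        show ((n+4:ℕ):ℤ) - 2*(j:ℤ) = ((n:ℤ)+3-2*(j:ℤ))+1 by push_cast; ring,
        show ((n+2:ℕ):ℤ) - 2*(j:ℤ) = ((n:ℤ)+3-2*(j:ℤ))-1 by push_cast; ring,
        show ((n+5:ℕ):ℤ) - 2*(j:ℤ) = ((n:ℤ)+3-2*(j:ℤ))+2 by push_cast; ring,
        show ((n+1:ℕ):ℤ) - 2*(j:ℤ) = ((n:ℤ)+3-2*(j:ℤ))-2 by push_cast; ring]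
      have key := mv_int ((n:ℤ)+3-2*(j:ℤ)) (by omega)
      linear_combination key * ((2:ℝ)^(t+2))⁻¹

noncomputable def nod (t k : ℕ) : ℝ := (k : ℝ) / 2 ^ (t+1)

lemma hat_node (t i k : ℕ) : hat t i (nod t k) = if i = k then 1 else 0 := by
  have hP : ((2:ℝ) ^ (t+1)) ≠ 0 := by positivity
  rw [hat, nod, div_mul_cancel₀ _ hP]
  rcases eq_or_ne i k with rfl | h
  · rw [sub_self, abs_zero]; norm_num
  · have : (1:ℝ) ≤ |(k:ℝ) - (i:ℝ)| := by
      have h1 : ((1:ℤ)) ≤ |(k:ℤ) - (i:ℤ)| := Int.one_le_abs (by omega)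
      exact_mod_cast h1
    rw [if_neg h, max_eq_left (by linarith)]

lemma nod_mem (t k : ℕ) (h1 : 1 ≤ k) (h2 : k ≤ 2^(t+1) - 1) : 0 < nod t k ∧ nod t k < 1 := by
  have hP : (0:ℝ) < 2 ^ (t+1) := by positivity
  constructor
  · apply div_pos _ hP; exact_mod_cast h1
  · rw [nod, div_lt_one hP]
    have : (k:ℝ) < 2^(t+1) := by
      have : k < 2^(t+1) := by
        have := Nat.one_le_two_pow (n := t+1); omega
      exact_mod_cast this
    exact this

lemma prew_cont (t i : ℕ) : Continuous (prew t i) := by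
  rcases eq_or_ne t 0 with rfl | ht
  · have : prew 0 i = hat 0 1 := by funext x; rw [prew, if_pos rfl]
    rw [this]; exact hat_cont 0 1
  · rcases eq_or_ne i 1 with rfl | hi
    · have : prew t 1 = fun x => 9/10 * hat t 1 x - 3/5 * hat t 2 x + 1/10 * hat t 3 x := by
        funext x; rw [prew, if_neg ht, if_pos rfl]
      rw [this]
      exact ((continuous_const.mul (hat_cont t 1)).sub (continuous_const.mul (hat_cont t 2))).add
        (continuous_const.mul (hat_cont t 3))
    · rcases eq_or_ne i (2^(t+1)-1) with hR | hR
      · have : prew t i = fun x =>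
            9/10 * hat t i x - 3/5 * hat t (i-1) x + 1/10 * hat t (i-2) x := by
          funext x; rw [prew, if_neg ht, if_neg hi, if_pos hR]
        rw [this]
        exact ((continuous_const.mul (hat_cont t i)).sub
          (continuous_const.mul (hat_cont t (i-1)))).add
          (continuous_const.mul (hat_cont t (i-2)))
      · have : prew t i = fun x => hat t i x - 3/5 * (hat t (i+1) x + hat t (i-1) x)
            + 1/10 * (hat t (i+2) x + hat t (i-2) x) := by
          funext x; rw [prew, if_neg ht, if_neg hi, if_neg hR]
        rw [this]
        exact ((hat_cont t i).sub
          (continuous_const.mul ((hat_cont t (i+1)).add (hat_cont t (i-1))))).add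
          (continuous_const.mul ((hat_cont t (i+2)).add (hat_cont t (i-2))))

lemma span_set_eq (s : Finset ℕ) (v : ℕ → ℝ → ℝ) :
    {f | ∃ i ∈ s, f = v i} = v '' (s : Set ℕ) := by
  ext f
  simp only [Set.mem_setOf_eq, Set.mem_image, Finset.mem_coe]
  constructor
  · rintro ⟨i, hi, rfl⟩; exact ⟨i, hi, rfl⟩
  · rintro ⟨i, hi, rfl⟩; exact ⟨i, hi, rfl⟩

lemma mem_span_finset' (s : Finset ℕ) (v : ℕ → ℝ → ℝ) (f : ℝ → ℝ)
    (hf : f ∈ Submodule.span ℝ {f | ∃ i ∈ s, f = v i}) :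
    ∃ c : ℕ → ℝ, f = ∑ i ∈ s, c i • v i := by
  rw [span_set_eq, Finsupp.mem_span_image_iff_linearCombination] at hf
  obtain ⟨l, hl, rfl⟩ := hf
  refine ⟨l, ?_⟩
  rw [Finsupp.linearCombination_apply, Finsupp.sum]
  exact Finset.sum_subset
    (fun i hi => Finset.mem_coe.mp ((Finsupp.mem_supported ℝ l).mp hl hi))
    (fun i _ hni => by rw [Finsupp.notMem_support_iff.mp hni, zero_smul])

lemma span_mem (s : Finset ℕ) (v : ℕ → ℝ → ℝ) (c : ℕ → ℝ) :
    (∑ i ∈ s, c i • v i) ∈ Submodule.span ℝ {f | ∃ i ∈ s, f = v i} :=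
  Submodule.sum_mem _ fun i hi =>
    Submodule.smul_mem _ _ (Submodule.subset_span ⟨i, hi, rfl⟩)

lemma sum_eval (s : Finset ℕ) (v : ℕ → ℝ → ℝ) (c : ℕ → ℝ) (x : ℝ) :
    (∑ i ∈ s, c i • v i) x = ∑ i ∈ s, c i * v i x := by
  rw [Finset.sum_apply]
  simp [Pi.smul_apply, smul_eq_mul]

lemma hat_sum_eval (t k : ℕ) (c : ℕ → ℝ) (hk : k ∈ Idx t) :
    (∑ i ∈ Idx t, c i • hat t i) (nod t k) = c k := by
  rw [sum_eval]
  have : ∀ i ∈ Idx t, c i * hat t i (nod t k) = if i = k then c i else 0 := by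
    intro i _
    rw [hat_node]
    split_ifs <;> simp
  rw [Finset.sum_congr rfl this, Finset.sum_ite_eq' (Idx t) k c, if_pos hk]

lemma orth_span (t : ℕ) (f w : ℝ → ℝ) (hf : f ∈ Vsp t) (hw : w ∈ Wsp (t+1)) :
    ∫ x in (0:ℝ)..1, f x * w x = 0 := by
  obtain ⟨b, rfl⟩ := mem_span_finset' _ _ _ hf
  obtain ⟨c, rfl⟩ := mem_span_finset' _ _ _ hw
  have e : ∀ x : ℝ, (∑ j ∈ Idx t, b j • hat t j) x * (∑ i ∈ Xi (t+1), c i • prew (t+1) i) x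
      = ∑ j ∈ Idx t, ∑ i ∈ Xi (t+1), (b j * c i) * (prew (t+1) i x * hat t j x) := by
    intro x
    rw [sum_eval, sum_eval, Finset.sum_mul_sum]
    apply Finset.sum_congr rfl; intro j _
    apply Finset.sum_congr rfl; intro i _
    ring
  rw [integral_congr (g := fun x => ∑ j ∈ Idx t, ∑ i ∈ Xi (t+1),
      (b j * c i) * (prew (t+1) i x * hat t j x)) (fun x _ => e x)]
  rw [intervalIntegral.integral_finset_sum]
  · have : ∀ j ∈ Idx t, (∫ x in (0:ℝ)..1, ∑ i ∈ Xi (t+1),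
        (b j * c i) * (prew (t+1) i x * hat t j x)) = 0 := by
      intro j hj
      rw [intervalIntegral.integral_finset_sum]
      · apply Finset.sum_eq_zero
        intro i hi
        rw [intervalIntegral.integral_const_mul, orth_core t i j hi hj, mul_zero]
      · intro i _
        exact (((prew_cont (t+1) i).mul (hat_cont t j)).intervalIntegrable _ _).const_mul _
    rw [Finset.sum_congr rfl this, Finset.sum_const, smul_zero]
  · intro j _
    apply Continuous.intervalIntegrable
    apply continuous_finset_sum
    intro i _
    exact continuous_const.mul ((prew_cont (t+1) i).mul (hat_cont t j))

lemma cont_of_mem_Vsp (t : ℕ) (f : ℝ → ℝ) (hf : f ∈ Vsp t) : Continuous f := by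
  obtain ⟨b, rfl⟩ := mem_span_finset' _ _ _ hf
  have : (∑ i ∈ Idx t, b i • hat t i) = fun x => ∑ i ∈ Idx t, b i * hat t i x := by
    funext x; rw [sum_eval]
  rw [this]
  apply continuous_finset_sum
  intro i _
  exact continuous_const.mul (hat_cont t i)

lemma zero_on_unit (f : ℝ → ℝ) (hf : Continuous f)
    (hint : ∫ x in (0:ℝ)..1, f x * f x = 0) (x₀ : ℝ) (h0 : 0 < x₀) (h1 : x₀ < 1) :
    f x₀ = 0 := by
  by_contra hne
  have hsq : Continuous (fun x => f x * f x) := hf.mul hf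
  have hx0 : 0 < f x₀ * f x₀ := mul_self_pos.mpr hne
  have hopen : IsOpen ((fun x => f x * f x) ⁻¹' Set.Ioi 0) := isOpen_Ioi.preimage hsq
  obtain ⟨ε, hε, hball⟩ := Metric.isOpen_iff.mp hopen x₀ hx0
  set a := max (x₀ - ε/2) (x₀/2) with ha
  set b := min (x₀ + ε/2) ((x₀+1)/2) with hb
  have hab : a < b := by
    rw [ha, hb]
    rcases le_total (x₀ - ε/2) (x₀/2) with h | h <;>
    rcases le_total (x₀ + ε/2) ((x₀+1)/2) with h' | h' <;>
    simp only [max_eq_left, max_eq_right, min_eq_left, min_eq_right, h, h'] <;> linarith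
  have hax : 0 < a := lt_max_of_lt_right (by linarith)
  have hbx : b < 1 := min_lt_of_right_lt (by linarith)
  have hpos : ∀ x ∈ Set.Ioo a b, 0 < f x * f x := by
    intro x hx
    apply hball
    rw [Metric.mem_ball, Real.dist_eq, abs_lt]
    have h₁ : x₀ - ε/2 ≤ a := le_max_left _ _
    have h₂ : b ≤ x₀ + ε/2 := min_le_left _ _
    constructor <;> [linarith [hx.1]; linarith [hx.2]]
  have hlow : 0 < ∫ x in a..b, f x * f x :=
    intervalIntegral_pos_of_pos_on (hsq.intervalIntegrable _ _) hpos hab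
  have hmono : (∫ x in a..b, f x * f x) ≤ ∫ x in (0:ℝ)..1, f x * f x := by
    apply integral_mono_interval (le_of_lt hax) (le_of_lt hab) (le_of_lt hbx)
    · exact Filter.Eventually.of_forall (fun x => mul_self_nonneg (f x))
    · exact hsq.intervalIntegrable _ _
  linarith [hint ▸ hmono]

lemma disjoint_VW (t : ℕ) : Disjoint (Vsp t) (Wsp (t+1)) := by
  rw [Submodule.disjoint_def]
  intro f hfV hfW
  have hint : ∫ x in (0:ℝ)..1, f x * f x = 0 := orth_span t f f hfV hfW
  have hcont : Continuous f := cont_of_mem_Vsp t f hfV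
  obtain ⟨b, hb⟩ := mem_span_finset' _ _ _ hfV
  have hzero : ∀ k ∈ Idx t, b k = 0 := by
    intro k hk
    have hk' := hk
    rw [Idx, Finset.mem_Icc] at hk'
    obtain ⟨hn0, hn1⟩ := nod_mem t k hk'.1 hk'.2
    have := zero_on_unit f hcont hint (nod t k) hn0 hn1
    rw [hb, hat_sum_eval t k b hk] at this
    exact this
  rw [hb]
  apply Finset.sum_eq_zero
  intro i hi
  rw [hzero i hi, zero_smul]

set_option maxHeartbeats 1000000 in
lemma prew_node (t i k : ℕ) (hi : i ∈ Xi (t+1)) (hk : k ∈ Xi (t+1)) :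
    prew (t+1) i (nod (t+1) k)
      = if i = k then (if i = 1 ∨ i = 2^(t+1+1)-1 then 9/10 else 1)
        else if i = k+2 ∨ i+2 = k then 1/10 else 0 := by
  rw [Xi, if_neg (Nat.succ_ne_zero t), Finset.mem_filter, Idx, Finset.mem_Icc,
    Nat.odd_iff] at hi hk
  have hp2 : (2:ℕ)^(t+1+1) = 2 * 2^(t+1) := by ring
  have hp1 : (2:ℕ)^(t+1) = 2 * 2^t := by ring
  have hpow : (1:ℕ) ≤ 2 ^ t := Nat.one_le_two_pow
  rcases eq_or_ne i 1 with rfl | hi1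
  · rw [prew, if_neg (Nat.succ_ne_zero t), if_pos rfl, hat_node, hat_node, hat_node]
    split_ifs <;> first | omega | norm_num | (exfalso; omega)
  · obtain ⟨n, rfl⟩ : ∃ n, i = n + 3 := ⟨i - 3, by omega⟩
    rcases eq_or_ne (n+3) (2^(t+1+1)-1) with hR | hR
    · rw [prew, if_neg (Nat.succ_ne_zero t), if_neg hi1, if_pos hR,
        show n+3-1 = n+2 by omega, show n+3-2 = n+1 by omega,
        hat_node, hat_node, hat_node]
      split_ifs <;> first | omega | norm_num | (exfalso; omega)
    · rw [prew, if_neg (Nat.succ_ne_zero t), if_neg hi1, if_neg hR,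
        show n+3+1 = n+4 by omega, show n+3-1 = n+2 by omega,
        show n+3+2 = n+5 by omega, show n+3-2 = n+1 by omega,
        hat_node, hat_node, hat_node, hat_node, hat_node]
      split_ifs <;> first | omega | norm_num | (exfalso; omega)

lemma one_mem_Xi (t : ℕ) : 1 ∈ Xi (t+1) := by
  rw [Xi, if_neg (Nat.succ_ne_zero t), Finset.mem_filter, Idx, Finset.mem_Icc, Nat.odd_iff]
  have hp2 : (2:ℕ)^(t+1+1) = 2 * 2^(t+1) := by ring
  have hpow : (1:ℕ) ≤ 2 ^ (t+1) := Nat.one_le_two_pow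
  omega

lemma prew_indep (t : ℕ) :
    LinearIndependent ℝ (fun i : ↥(Xi (t+1)) => prew (t+1) (i : ℕ)) := by
  rw [Fintype.linearIndependent_iff]
  intro gg hg
  classical
  set c : ℕ → ℝ := fun n => if h : n ∈ Xi (t+1) then gg ⟨n, h⟩ else 0 with hc
  have hcg : ∀ i : ↥(Xi (t+1)), c (i : ℕ) = gg i := by
    intro i; rw [hc]; simp only [i.2, dif_pos]
  have sum_attach' : ∑ i ∈ (Xi (t+1)).attach, c ↑i • prew (t+1) ↑i
      = ∑ i ∈ Xi (t+1), c i • prew (t+1) i :=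
    Finset.sum_attach (Xi (t+1)) (fun n => c n • prew (t+1) n)
  have hgc : ∑ n ∈ Xi (t+1), c n • prew (t+1) n = (0 : ℝ → ℝ) := by
    rw [← sum_attach', ← hg, Finset.univ_eq_attach]
    apply Finset.sum_congr rfl
    intro i _
    rw [hcg]
  have hsum : ∀ k, k ∈ Xi (t+1) → ∑ i ∈ Xi (t+1), c i * prew (t+1) i (nod (t+1) k) = 0 := by
    intro k hk
    have h0 := congrFun hgc (nod (t+1) k)
    rw [sum_eval, Pi.zero_apply] at h0
    exact h0
  have hzero : ∀ k ∈ Xi (t+1), c k = 0 := by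
    obtain ⟨k, hk, hmax⟩ := Finset.exists_max_image (Xi (t+1)) (fun n => |c n|)
      ⟨1, one_mem_Xi t⟩
    have hck : c k = 0 := by
      have heq := hsum k hk
      rw [← Finset.sum_erase_add _ _ hk] at heq
      have hMkk : prew (t+1) k (nod (t+1) k)
          = if k = 1 ∨ k = 2^(t+1+1)-1 then 9/10 else 1 := by
        rw [prew_node t k k hk hk, if_pos rfl]
      have hDk : (9/10 : ℝ) ≤ prew (t+1) k (nod (t+1) k) := by
        rw [hMkk]; split_ifs <;> norm_num
      have hDk1 : prew (t+1) k (nod (t+1) k) ≤ 1 := by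
        rw [hMkk]; split_ifs <;> norm_num
      have hS : |∑ i ∈ (Xi (t+1)).erase k, c i * prew (t+1) i (nod (t+1) k)|
          ≤ |c k| * (2/10) := by
        calc |∑ i ∈ (Xi (t+1)).erase k, c i * prew (t+1) i (nod (t+1) k)|
            ≤ ∑ i ∈ (Xi (t+1)).erase k, |c i * prew (t+1) i (nod (t+1) k)| :=
              Finset.abs_sum_le_sum_abs _ _
        _ ≤ ∑ i ∈ (Xi (t+1)).erase k,
              |c k| * ((if i = k+2 then 1/10 else 0) + (if i+2 = k then 1/10 else 0)) := by
            apply Finset.sum_le_sum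
            intro i hie
            obtain ⟨hik, hiX⟩ := Finset.mem_erase.mp hie
            rw [abs_mul, prew_node t i k hiX hk, if_neg hik]
            have h1 : |c i| ≤ |c k| := hmax i hiX
            have h2 : |(if i = k+2 ∨ i+2 = k then (1/10:ℝ) else 0)|
                ≤ (if i = k+2 then (1/10:ℝ) else 0) + (if i+2 = k then (1/10:ℝ) else 0) := by
              split_ifs <;>
                first | omega | (rw [abs_of_nonneg (by norm_num)]; norm_num)
            exact mul_le_mul h1 h2 (abs_nonneg _) (abs_nonneg _)
        _ = |c k| * ∑ i ∈ (Xi (t+1)).erase k,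
              ((if i = k+2 then (1/10:ℝ) else 0) + (if i+2 = k then (1/10:ℝ) else 0)) := by
            rw [Finset.mul_sum]
        _ ≤ |c k| * (2/10) := by
            apply mul_le_mul_of_nonneg_left _ (abs_nonneg _)
            rw [Finset.sum_add_distrib]
            have hA : ∑ i ∈ (Xi (t+1)).erase k, (if i = k+2 then (1/10:ℝ) else 0) ≤ 1/10 := by
              rw [Finset.sum_ite_eq' _ (k+2) (fun _ => (1/10:ℝ))]
              split_ifs <;> norm_num
            have hB : ∑ i ∈ (Xi (t+1)).erase k, (if i+2 = k then (1/10:ℝ) else 0) ≤ 1/10 := by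
              have hle : ∀ i ∈ (Xi (t+1)).erase k,
                  (if i+2 = k then (1/10:ℝ) else 0) ≤ (if i = k-2 then (1/10:ℝ) else 0) := by
                intro i _
                split_ifs <;> first | omega | norm_num
              calc ∑ i ∈ (Xi (t+1)).erase k, (if i+2 = k then (1/10:ℝ) else 0)
                  ≤ ∑ i ∈ (Xi (t+1)).erase k, (if i = k-2 then (1/10:ℝ) else 0) :=
                    Finset.sum_le_sum hle
              _ ≤ 1/10 := by
                  rw [Finset.sum_ite_eq' _ (k-2) (fun _ => (1/10:ℝ))]
                  split_ifs <;> norm_num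
            linarith
      have habs : |c k| * (9/10) ≤ |c k| * (2/10) := by
        have h1 : c k * prew (t+1) k (nod (t+1) k)
            = -∑ i ∈ (Xi (t+1)).erase k, c i * prew (t+1) i (nod (t+1) k) := by linarith
        have h2 : |c k * prew (t+1) k (nod (t+1) k)| ≤ |c k| * (2/10) := by
          rw [h1, abs_neg]; exact hS
        rw [abs_mul] at h2
        have h3 : |c k| * (9/10) ≤ |c k| * |prew (t+1) k (nod (t+1) k)| := by
          apply mul_le_mul_of_nonneg_left _ (abs_nonneg _)
          rw [abs_of_nonneg (by linarith)]
          exact hDk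
        linarith
      have : |c k| ≤ 0 := by nlinarith [abs_nonneg (c k)]
      have := abs_eq_zero.mp (le_antisymm this (abs_nonneg _))
      exact this
    intro k' hk'
    have : |c k'| ≤ |c k| := hmax k' hk'
    rw [hck] at this
    simp only [abs_zero] at this
    exact abs_eq_zero.mp (le_antisymm this (abs_nonneg _))
  intro i
  rw [← hcg i]
  exact hzero (i : ℕ) i.2

lemma hat_indep (s : ℕ) :
    LinearIndependent ℝ (fun i : ↥(Idx s) => hat s (i : ℕ)) := by
  rw [Fintype.linearIndependent_iff]
  intro gg hg
  classical
  set c : ℕ → ℝ := fun n => if h : n ∈ Idx s then gg ⟨n, h⟩ else 0 with hc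
  have hcg : ∀ i : ↥(Idx s), c (i : ℕ) = gg i := by
    intro i; rw [hc]; simp only [i.2, dif_pos]
  have sum_attach' : ∑ i ∈ (Idx s).attach, c ↑i • hat s ↑i = ∑ i ∈ Idx s, c i • hat s i :=
    Finset.sum_attach (Idx s) (fun n => c n • hat s n)
  have hgc : ∑ n ∈ Idx s, c n • hat s n = (0 : ℝ → ℝ) := by
    rw [← sum_attach', ← hg, Finset.univ_eq_attach]
    apply Finset.sum_congr rfl
    intro i _
    rw [hcg]
  intro i
  rw [← hcg i]
  have := congrFun hgc (nod s (i : ℕ))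
  rw [hat_sum_eval s (i : ℕ) c i.2, Pi.zero_apply] at this
  exact this

lemma range_eq_gen (s : Finset ℕ) (v : ℕ → ℝ → ℝ) :
    Set.range (fun i : ↥s => v (i : ℕ)) = {f | ∃ i ∈ s, f = v i} := by
  ext f
  simp only [Set.mem_range, Set.mem_setOf_eq]
  constructor
  · rintro ⟨i, rfl⟩; exact ⟨i, i.2, rfl⟩
  · rintro ⟨i, hi, rfl⟩; exact ⟨⟨i, hi⟩, rfl⟩

lemma card_Idx (s : ℕ) : (Idx s).card = 2^(s+1) - 1 := by
  rw [Idx, Nat.card_Icc]; omega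

lemma card_Xi (t : ℕ) : (Xi (t+1)).card = 2^(t+1) := by
  have hp2 : (2:ℕ)^(t+1+1) = 2 * 2^(t+1) := by ring
  have hpow : (1:ℕ) ≤ 2 ^ (t+1) := Nat.one_le_two_pow
  have himg : Xi (t+1) = (Finset.range (2^(t+1))).image (fun m => 2*m+1) := by
    ext n
    rw [Xi, if_neg (Nat.succ_ne_zero t), Finset.mem_filter, Idx, Finset.mem_Icc, Nat.odd_iff,
      Finset.mem_image]
    constructor
    · rintro ⟨⟨h1, h2⟩, h3⟩
      exact ⟨n/2, Finset.mem_range.mpr (by omega), by omega⟩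
    · rintro ⟨m, hm, rfl⟩
      have := Finset.mem_range.mp hm
      omega
  rw [himg, Finset.card_image_of_injective _ (fun a b h => by omega), Finset.card_range]

lemma finrank_V (s : ℕ) : Module.finrank ℝ (Vsp s) = 2^(s+1) - 1 := by
  have : Vsp s = Submodule.span ℝ (Set.range (fun i : ↥(Idx s) => hat s (i : ℕ))) := by
    rw [Vsp, range_eq_gen]
  rw [this, finrank_span_eq_card (hat_indep s), Fintype.card_coe, card_Idx]

lemma finrank_W (t : ℕ) : Module.finrank ℝ (Wsp (t+1)) = 2^(t+1) := by
  have : Wsp (t+1) = Submodule.span ℝ (Set.range (fun i : ↥(Xi (t+1)) => prew (t+1) (i : ℕ))) := by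
    rw [Wsp, range_eq_gen]
  rw [this, finrank_span_eq_card (prew_indep t), Fintype.card_coe, card_Xi]

instance fd_V (s : ℕ) : FiniteDimensional ℝ (Vsp s) := by
  rw [Vsp, span_set_eq]
  exact FiniteDimensional.span_of_finite ℝ ((Idx s).finite_toSet.image _)

instance fd_W (s : ℕ) : FiniteDimensional ℝ (Wsp s) := by
  rw [Wsp, span_set_eq]
  exact FiniteDimensional.span_of_finite ℝ ((Xi s).finite_toSet.image _)

lemma V_le (s : ℕ) : Vsp s ≤ Vsp (s+1) := by
  rw [Vsp, Submodule.span_le]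
  rintro f ⟨j, hj, rfl⟩
  rw [Idx, Finset.mem_Icc] at hj
  have hp2 : (2:ℕ)^(s+1+1) = 2 * 2^(s+1) := by ring
  have hpow : (1:ℕ) ≤ 2 ^ (s+1) := Nat.one_le_two_pow
  have heq : hat s j = (1/2 : ℝ) • hat (s+1) (2*j-1) + hat (s+1) (2*j)
      + (1/2 : ℝ) • hat (s+1) (2*j+1) := by
    funext x
    simp only [Pi.add_apply, Pi.smul_apply, smul_eq_mul]
    rw [hat_refine s j hj.1 x]
  rw [heq]
  have m1 : hat (s+1) (2*j-1) ∈ Vsp (s+1) :=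
    Submodule.subset_span ⟨2*j-1, by rw [Idx, Finset.mem_Icc]; omega, rfl⟩
  have m2 : hat (s+1) (2*j) ∈ Vsp (s+1) :=
    Submodule.subset_span ⟨2*j, by rw [Idx, Finset.mem_Icc]; omega, rfl⟩
  have m3 : hat (s+1) (2*j+1) ∈ Vsp (s+1) :=
    Submodule.subset_span ⟨2*j+1, by rw [Idx, Finset.mem_Icc]; omega, rfl⟩
  exact Submodule.add_mem _ (Submodule.add_mem _ (Submodule.smul_mem _ _ m1) m2)
    (Submodule.smul_mem _ _ m3)

lemma W_le (s : ℕ) : Wsp (s+1) ≤ Vsp (s+1) := by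
  rw [Wsp, Submodule.span_le]
  rintro f ⟨i, hi, rfl⟩
  rw [Xi, if_neg (Nat.succ_ne_zero s), Finset.mem_filter, Idx, Finset.mem_Icc,
    Nat.odd_iff] at hi
  have hp2 : (2:ℕ)^(s+1+1) = 2 * 2^(s+1) := by ring
  have hp1 : (2:ℕ)^(s+1) = 2 * 2^s := by ring
  have hpow : (1:ℕ) ≤ 2 ^ s := Nat.one_le_two_pow
  have hm : ∀ a, 1 ≤ a → a ≤ 2^(s+1+1)-1 → hat (s+1) a ∈ Vsp (s+1) := by
    intro a h1 h2
    exact Submodule.subset_span ⟨a, by rw [Idx, Finset.mem_Icc]; omega, rfl⟩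
  rcases eq_or_ne i 1 with rfl | hi1
  · have heq : prew (s+1) 1 = (9/10 : ℝ) • hat (s+1) 1 - (3/5 : ℝ) • hat (s+1) 2
        + (1/10 : ℝ) • hat (s+1) 3 := by
      funext x
      simp only [Pi.add_apply, Pi.sub_apply, Pi.smul_apply, smul_eq_mul]
      rw [prew, if_neg (Nat.succ_ne_zero s), if_pos rfl]
    rw [heq]
    exact Submodule.add_mem _
      (Submodule.sub_mem _ (Submodule.smul_mem _ _ (hm 1 (by omega) (by omega)))
        (Submodule.smul_mem _ _ (hm 2 (by omega) (by omega))))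
      (Submodule.smul_mem _ _ (hm 3 (by omega) (by omega)))
  · rcases eq_or_ne i (2^(s+1+1)-1) with hR | hR
    · have heq : prew (s+1) i = (9/10 : ℝ) • hat (s+1) i - (3/5 : ℝ) • hat (s+1) (i-1)
          + (1/10 : ℝ) • hat (s+1) (i-2) := by
        funext x
        simp only [Pi.add_apply, Pi.sub_apply, Pi.smul_apply, smul_eq_mul]
        rw [prew, if_neg (Nat.succ_ne_zero s), if_neg hi1, if_pos hR]
      rw [heq]
      exact Submodule.add_mem _
        (Submodule.sub_mem _ (Submodule.smul_mem _ _ (hm i (by omega) (by omega)))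
          (Submodule.smul_mem _ _ (hm (i-1) (by omega) (by omega))))
        (Submodule.smul_mem _ _ (hm (i-2) (by omega) (by omega)))
    · have heq : prew (s+1) i = hat (s+1) i
          - (3/5 : ℝ) • (hat (s+1) (i+1) + hat (s+1) (i-1))
          + (1/10 : ℝ) • (hat (s+1) (i+2) + hat (s+1) (i-2)) := by
        funext x
        simp only [Pi.add_apply, Pi.sub_apply, Pi.smul_apply, smul_eq_mul]
        rw [prew, if_neg (Nat.succ_ne_zero s), if_neg hi1, if_neg hR]
      rw [heq]
      exact Submodule.add_mem _
        (Submodule.sub_mem _ (hm i (by omega) (by omega))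
          (Submodule.smul_mem _ _ (Submodule.add_mem _
            (hm (i+1) (by omega) (by omega)) (hm (i-1) (by omega) (by omega)))))
        (Submodule.smul_mem _ _ (Submodule.add_mem _
          (hm (i+2) (by omega) (by omega)) (hm (i-2) (by omega) (by omega))))

end aux

/-- For `t ≥ 1`: `V_t = V_{t-1} ⊕ W_t`, the sum being direct and L²-orthogonal on
`[0,1]`, with `dim W_t = 2^t`. -/
theorem prewavelet_complement (t : ℕ) (ht : 1 ≤ t) :
    Vsp (t - 1) ⊔ Wsp t = Vsp t ∧
    Disjoint (Vsp (t - 1)) (Wsp t) ∧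
    (∀ f ∈ Vsp (t - 1), ∀ g ∈ Wsp t, ∫ x in (0:ℝ)..1, f x * g x = 0) ∧
    Module.finrank ℝ (Wsp t) = 2 ^ t := by
  obtain ⟨s, rfl⟩ : ∃ s, t = s + 1 := ⟨t - 1, by omega⟩
  simp only [Nat.add_sub_cancel]
  have hdisj := disjoint_VW s
  refine ⟨?_, hdisj, fun f hf w hw => orth_span s f w hf hw, finrank_W s⟩
  apply Submodule.eq_of_le_of_finrank_le (sup_le (V_le s) (W_le s))
  have hrank := Submodule.finrank_sup_add_finrank_inf_eq (Vsp s) (Wsp (s+1))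
  rw [hdisj.eq_bot, finrank_bot, finrank_V s, finrank_W s] at hrank
  rw [finrank_V (s+1)]
  have hp2 : (2:ℕ)^(s+1+1) = 2 * 2^(s+1) := by ring
  have hpow : (1:ℕ) ≤ 2 ^ (s+1) := Nat.one_le_two_pow
  omega
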